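/- Let n ≥ k ≥ 1, let γ₁ = (∏_{r=1}^p a_r)/(∏_{s=1}^q b_s), and let Δ₁(k,−n) = ∏_{j=1}^k (−(n−j+1)/k). Let Ã_{n−k}^{(k)}(m,x) denote the generalized hypergeometric Appell polynomial of index n−k built from the shifted parameters a₁+1, …, a_p+1 and b₁+1, …, b_q+1 (i.e., with γ̃_i = (∏_{r=1}^p (a_r+1)^{(i)})/(∏_{s=1}^q (b_s+1)^{(i)}) in place of γ_i). Then for all real x: n·x·A_{n−1}^{(k)}(m,x) = n·A_n^{(k)}(m,x) − k·m·γ₁·Δ₁(k,−n)·Ã_{n−k}^{(k)}(m,x). (This is the paper's identity for the generalized hypergeometric function ₚ₊ₖF_q with parameter arrays Δ(k,−n+1), Δ(k,−n) and Δ(k,−n+k), after multiplying both sides by x.) -/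

import Mathlib

open Finset

/-- Rising factorial (Pochhammer symbol) `x^(n) = x(x+1)⋯(x+n-1)`. -/
noncomputable def risingFact (x : ℝ) (n : ℕ) : ℝ := (ascPochhammer ℝ n).eval x

/-- `γ_i = (∏_r a_r^{(i)}) / (∏_s b_s^{(i)})`. -/
noncomputable def ghGamma {p q : ℕ} (a : Fin p → ℝ) (b : Fin q → ℝ) (i : ℕ) : ℝ :=
  (∏ r, risingFact (a r) i) / (∏ s, risingFact (b s) i)

/-- The generalized hypergeometric Appell polynomial `A_n^{(k)}(m,x)` (as a function of `x`). -/
noncomputable def ghAppell {p q : ℕ} (a : Fin p → ℝ) (b : Fin q → ℝ)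
    (k : ℕ) (m : ℝ) (n : ℕ) (x : ℝ) : ℝ :=
  ∑ i ∈ Finset.range (n / k + 1),
    ((n.factorial : ℝ) / (i.factorial * (n - k * i).factorial)) * ghGamma a b i *
      ((-1) ^ (k * i) * m ^ i / (k : ℝ) ^ (k * i)) * x ^ (n - k * i)

lemma risingFact_succ_left (x : ℝ) (j : ℕ) :
    risingFact x (j+1) = x * risingFact (x+1) j := by
  simp [risingFact, ascPochhammer_succ_left, Polynomial.eval_comp]

lemma ghGamma_succ {p q : ℕ} (a : Fin p → ℝ) (b : Fin q → ℝ) (j : ℕ) :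
    ghGamma a b (j+1) =
      ((∏ r, a r) / (∏ s, b s)) * ghGamma (fun r => a r + 1) (fun s => b s + 1) j := by
  unfold ghGamma
  rw [div_mul_div_comm]
  congr 1 <;> rw [← Finset.prod_mul_distrib] <;>
    exact Finset.prod_congr rfl fun r _ => risingFact_succ_left _ _


set_option maxHeartbeats 1600000 in
/-- for `n ≥ k ≥ 1`,
`n·x·A_{n-1}^{(k)}(m,x) = n·A_n^{(k)}(m,x) − k·m·γ₁·Δ₁(k,−n)·Ã_{n-k}^{(k)}(m,x)`,
where `γ₁ = (∏ a_r)/(∏ b_s)`, `Δ₁(k,−n) = ∏_{j=1}^k (−(n−j+1)/k)` and `Ã` is built from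
the shifted parameters `a_r + 1`, `b_s + 1`. -/
theorem ghAppell_derivative_identity {p q : ℕ} (a : Fin p → ℝ) (b : Fin q → ℝ)
    (hb : ∀ s : Fin q, ∀ j : ℕ, b s ≠ -(j : ℝ))
    (k : ℕ) (hk : 1 ≤ k) (m : ℝ) (n : ℕ) (hn : k ≤ n) (x : ℝ) :
    (n : ℝ) * x * ghAppell a b k m (n - 1) x =
      (n : ℝ) * ghAppell a b k m n x -
        (k : ℝ) * m * ((∏ r, a r) / (∏ s, b s)) *
          (∏ j ∈ Finset.range k, (-(((n : ℝ) - j)) / (k : ℝ))) *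
          ghAppell (fun r => a r + 1) (fun s => b s + 1) k m (n - k) x := by
  have hkpos : 0 < k := hk
  have hk0 : (k : ℝ) ≠ 0 := Nat.cast_ne_zero.mpr (by omega)
  have hn1 : 1 ≤ n := le_trans hk hn
  set E : ℕ → ℝ := fun i =>
    ((k * i : ℕ) : ℝ) * ((n.factorial : ℝ) / (i.factorial * (n - k * i).factorial)) *
      ghGamma a b i * ((-1) ^ (k * i) * m ^ i / (k : ℝ) ^ (k * i)) * x ^ (n - k * i) with hE
  have hdiv : ∀ i ∈ Finset.range (n / k + 1), k * i ≤ n := by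
    intro i hi
    rw [Finset.mem_range] at hi
    calc k * i ≤ k * (n / k) := Nat.mul_le_mul_left k (by omega)
    _ ≤ n := Nat.mul_div_le n k
  -- key 1 : n A_n = n x A_{n-1} + ∑ E
  have key1 : (n : ℝ) * ghAppell a b k m n x =
      (n : ℝ) * x * ghAppell a b k m (n - 1) x + ∑ i ∈ Finset.range (n / k + 1), E i := by
    unfold ghAppell
    rw [Finset.mul_sum]
    have split : ∀ i ∈ Finset.range (n / k + 1),
        (n : ℝ) * (((n.factorial : ℝ) / (i.factorial * (n - k * i).factorial)) * ghGamma a b i *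
          ((-1) ^ (k * i) * m ^ i / (k : ℝ) ^ (k * i)) * x ^ (n - k * i)) =
        (((n - k * i : ℕ) : ℝ) * (((n.factorial : ℝ) / (i.factorial * (n - k * i).factorial)) * ghGamma a b i *
          ((-1) ^ (k * i) * m ^ i / (k : ℝ) ^ (k * i)) * x ^ (n - k * i))) + E i := by
      intro i hi
      have h1 : k * i ≤ n := hdiv i hi
      have h2 : (n : ℝ) = ((n - k * i : ℕ) : ℝ) + ((k * i : ℕ) : ℝ) := by
        push_cast [h1]; ring
      rw [h2, hE]; ring
    rw [Finset.sum_congr rfl split, Finset.sum_add_distrib]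
    congr 1
    rw [Finset.mul_sum]
    have termwise : ∀ i ∈ Finset.range ((n-1) / k + 1),
        ((n - k * i : ℕ) : ℝ) * (((n.factorial : ℝ) / (i.factorial * (n - k * i).factorial)) * ghGamma a b i *
          ((-1) ^ (k * i) * m ^ i / (k : ℝ) ^ (k * i)) * x ^ (n - k * i)) =
        (n : ℝ) * x * ((((n-1).factorial : ℝ) / (i.factorial * (n - 1 - k * i).factorial)) * ghGamma a b i *
          ((-1) ^ (k * i) * m ^ i / (k : ℝ) ^ (k * i)) * x ^ (n - 1 - k * i)) := by
      intro i hi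
      rw [Finset.mem_range] at hi
      have h2 : k * i ≤ n - 1 := by
        calc k * i ≤ k * ((n-1) / k) := Nat.mul_le_mul_left k (by omega)
        _ ≤ n - 1 := Nat.mul_div_le _ k
      have h3 : n - k * i = (n - 1 - k * i) + 1 := by omega
      have h4 : (n - k * i).factorial = (n - k * i) * (n - 1 - k * i).factorial := by
        rw [h3, Nat.factorial_succ]
      have h5 : (n.factorial : ℝ) = (n : ℝ) * ((n-1).factorial : ℝ) := by
        have := Nat.mul_factorial_pred (show n ≠ 0 by omega)
        push_cast [← this]; ring
      have h6 : x ^ (n - k * i) = x ^ (n - 1 - k * i) * x := by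
        rw [h3, pow_succ]
      have hfac1 : ((n - 1 - k * i).factorial : ℝ) ≠ 0 :=
        Nat.cast_ne_zero.mpr (Nat.factorial_ne_zero _)
      have hfac2 : (i.factorial : ℝ) ≠ 0 := Nat.cast_ne_zero.mpr (Nat.factorial_ne_zero _)
      have hnki : ((n - k * i : ℕ) : ℝ) ≠ 0 := Nat.cast_ne_zero.mpr (by omega)
      rw [h4, h5, h6]
      push_cast
      field_simp
    have hQ := Nat.div_add_mod n k
    have hR : n % k < k := Nat.mod_lt n hkpos
    rcases Nat.eq_zero_or_pos (n % k) with hmod | hmod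
    · -- k ∣ n case
      have hQ1 : 1 ≤ n / k := (Nat.one_le_div_iff hkpos).mpr hn
      have e1 : n - 1 = k * (n / k - 1) + (k - 1) := by
        have h' : k * (n / k) = k * (n / k - 1) + k := by
          rw [← Nat.mul_succ]; congr 1; omega
        omega
      have hr : (n - 1) / k = n / k - 1 := by
        rw [e1, Nat.mul_add_div hkpos, Nat.div_eq_of_lt (show k - 1 < k by omega), add_zero]
      have htop : n - k * (n / k) = 0 := by omega
      rw [Finset.sum_range_succ, htop]
      simp only [Nat.cast_zero, zero_mul, add_zero]
      rw [show n / k = (n - 1) / k + 1 by omega]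
      exact Finset.sum_congr rfl termwise
    · -- k ∤ n case
      have e2 : n - 1 = k * (n / k) + (n % k - 1) := by omega
      have hr : (n - 1) / k = n / k := by
        rw [e2, Nat.mul_add_div hkpos, Nat.div_eq_of_lt (show n % k - 1 < k by omega), add_zero]
      rw [show n / k = (n - 1) / k from hr.symm]
      exact Finset.sum_congr rfl termwise
  -- key 2 : the Δ-term equals ∑ E
  have key2 : (k : ℝ) * m * ((∏ r, a r) / (∏ s, b s)) *
      (∏ j ∈ Finset.range k, (-(((n : ℝ) - j)) / (k : ℝ))) *
      ghAppell (fun r => a r + 1) (fun s => b s + 1) k m (n - k) x =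
      ∑ i ∈ Finset.range (n / k + 1), E i := by
    have hΔ : (∏ j ∈ Finset.range k, (-(((n : ℝ) - j)) / (k : ℝ))) =
        (-1 : ℝ) ^ k * (n.descFactorial k : ℝ) / (k : ℝ) ^ k := by
      have h1 : ∀ j ∈ Finset.range k, (-(((n : ℝ) - j)) / (k : ℝ)) =
          (-1 : ℝ) * ((n - j : ℕ) : ℝ) / (k : ℝ) := by
        intro j hj
        rw [Finset.mem_range] at hj
        have : j ≤ n := by omega
        push_cast [this]; ring
      rw [Finset.prod_congr rfl h1]
      simp only [Finset.prod_div_distrib, Finset.prod_mul_distrib, Finset.prod_const,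
        Finset.card_range]
      rw [← Nat.cast_prod, ← Nat.descFactorial_eq_prod_range]
    have hrange : n / k = (n - k) / k + 1 := by
      have := Nat.add_div_right (n - k) hkpos
      rw [Nat.sub_add_cancel hn] at this
      omega
    rw [Finset.sum_range_succ']
    have hE0 : E 0 = 0 := by simp [hE]
    rw [hE0, add_zero, hrange, hΔ]
    unfold ghAppell
    rw [Finset.mul_sum]
    apply Finset.sum_congr rfl
    intro j hj
    rw [Finset.mem_range] at hj
    have hms : k * (j + 1) = k * j + k := Nat.mul_succ k j
    have hj' : j ≤ (n - k) / k := by omega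
    have h1 : k * j ≤ n - k := le_trans (Nat.mul_le_mul_left k hj') (Nat.mul_div_le _ k)
    have hkj : k * (j + 1) ≤ n := by omega
    have hsub : n - k - k * j = n - k * (j + 1) := by omega
    have hDF : ((n - k).factorial : ℝ) * (n.descFactorial k : ℝ) = (n.factorial : ℝ) := by
      rw [← Nat.cast_mul, Nat.factorial_mul_descFactorial hn]
    have hγ := ghGamma_succ a b j
    have hpow1 : ((-1 : ℝ)) ^ (k * (j+1)) = (-1:ℝ) ^ (k * j) * (-1:ℝ) ^ k := by
      rw [← pow_add, hms]
    have hpow2 : ((k : ℝ)) ^ (k * (j+1)) = (k:ℝ) ^ (k * j) * (k:ℝ) ^ k := by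
      rw [← pow_add, hms]
    have hfacj : ((j+1).factorial : ℝ) = ((j:ℝ) + 1) * (j.factorial : ℝ) := by
      rw [Nat.factorial_succ]; push_cast; ring
    have hfj : (j.factorial : ℝ) ≠ 0 := Nat.cast_ne_zero.mpr (Nat.factorial_ne_zero _)
    have hfnk : ((n - k * (j+1)).factorial : ℝ) ≠ 0 := Nat.cast_ne_zero.mpr (Nat.factorial_ne_zero _)
    have hfnk2 : ((n - k).factorial : ℝ) ≠ 0 := Nat.cast_ne_zero.mpr (Nat.factorial_ne_zero _)
    have hj1 : ((j:ℝ) + 1) ≠ 0 := by positivity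
    simp only [hE]
    rw [hsub, hγ, hpow1, hpow2, hfacj, ← hDF]
    have hQ0 : (∏ s, b s) ≠ 0 :=
      Finset.prod_ne_zero_iff.mpr fun s _ => by simpa using hb s 0
    generalize ghGamma (fun r => a r + 1) (fun s => b s + 1) j = G
    generalize (∏ r, a r) = P
    generalize hQg : (∏ s, b s) = Q at hQ0 ⊢
    push_cast
    field_simp
    ring
  rw [key1, key2]; ring
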